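/- Gaussian regularization limit: let f : ℝ → ℝ be locally integrable on [0,∞) and suppose the improper integral converges, i.e. the partial integrals ∫₀^R f(x) dx tend to a limit I as R → ∞. Then for every t > 0 the integral ∫₀^∞ f(x) e^{-t x²} dx converges, and lim_{t→0⁺} ∫₀^∞ f(x) e^{-t x²} dx = I. -/

import Mathlib

open MeasureTheory Set Filter Topology

namespace GaussReg

lemma hasDerivAt_negE (t s : ℝ) :
    HasDerivAt (fun s : ℝ => -Real.exp (-t * s ^ 2)) (2 * t * s * Real.exp (-t * s ^ 2)) s := by
  have h : HasDerivAt (fun s : ℝ => Real.exp (-t * s ^ 2))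
      (Real.exp (-t * s ^ 2) * (-t * (2 * s ^ 1))) s :=
    (((hasDerivAt_pow 2 s).const_mul (-t))).exp
  have : HasDerivAt (fun s : ℝ => -Real.exp (-t * s ^ 2))
      (-(Real.exp (-t * s ^ 2) * (-t * (2 * s ^ 1)))) s := h.neg
  convert this using 1
  ring

lemma continuous_w (t : ℝ) : Continuous (fun s : ℝ => 2 * t * s * Real.exp (-t * s ^ 2)) := by
  continuity

lemma ftc_w (t a b : ℝ) :
    ∫ s in a..b, 2 * t * s * Real.exp (-t * s ^ 2)
      = Real.exp (-t * a ^ 2) - Real.exp (-t * b ^ 2) := by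
  rw [intervalIntegral.integral_eq_sub_of_hasDerivAt (fun s _ => hasDerivAt_negE t s)
    ((continuous_w t).intervalIntegrable _ _)]
  ring

lemma tendsto_negE (t : ℝ) (ht : 0 < t) :
    Tendsto (fun s : ℝ => -Real.exp (-t * s ^ 2)) atTop (𝓝 0) := by
  rw [show (0:ℝ) = -0 by ring]
  apply Tendsto.neg
  apply Real.tendsto_exp_atBot.comp
  have h : Tendsto (fun s : ℝ => t * s ^ 2) atTop atTop :=
    (tendsto_pow_atTop two_ne_zero).const_mul_atTop ht
  have := tendsto_neg_atBot_iff.mpr h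
  simpa [neg_mul] using this

lemma w_nonneg (t : ℝ) (ht : 0 < t) {s : ℝ} (hs : 0 ≤ s) :
    0 ≤ 2 * t * s * Real.exp (-t * s ^ 2) := by positivity

lemma integrable_w (t : ℝ) (ht : 0 < t) :
    IntegrableOn (fun s : ℝ => 2 * t * s * Real.exp (-t * s ^ 2)) (Ioi 0) := by
  apply integrableOn_Ioi_deriv_of_nonneg (g := fun s : ℝ => -Real.exp (-t * s ^ 2))
    (l := 0) (((Real.continuous_exp.comp (by continuity)).neg).continuousWithinAt)
  · exact fun x _ => hasDerivAt_negE t x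
  · exact fun x hx => w_nonneg t ht (le_of_lt hx)
  · exact tendsto_negE t ht

lemma integral_w (t : ℝ) (ht : 0 < t) :
    ∫ s in Ioi (0:ℝ), 2 * t * s * Real.exp (-t * s ^ 2) = 1 := by
  rw [integral_Ioi_of_hasDerivAt_of_tendsto' (fun x _ => hasDerivAt_negE t x)
    (integrable_w t ht) (tendsto_negE t ht)]
  norm_num

end GaussReg

namespace GaussReg2
open GaussReg

lemma fubini_triangle (f g : ℝ → ℝ) (R : ℝ)
    (hf : IntegrableOn f (Ioc 0 R)) (hg : Continuous g) :
    ∫ x in Ioc (0:ℝ) R, f x * (∫ s in Ioc x R, g s)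
      = ∫ s in Ioc (0:ℝ) R, (∫ x in Ioc (0:ℝ) s, f x) * g s := by
  set μ := volume.restrict (Ioc (0:ℝ) R) with hμ
  set G : ℝ × ℝ → ℝ := {p : ℝ × ℝ | p.1 < p.2}.indicator (fun p => f p.1 * g p.2) with hG
  have hGint : Integrable G (μ.prod μ) := by
    refine Integrable.indicator ?_ (measurableSet_lt measurable_fst measurable_snd)
    exact hf.mul_prod (hg.integrableOn_Ioc)
  have key : ∫ x, (∫ s, G (x, s) ∂μ) ∂μ = ∫ s, (∫ x, G (x, s) ∂μ) ∂μ :=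
    integral_integral_swap hGint
  have left : ∫ x in Ioc (0:ℝ) R, f x * (∫ s in Ioc x R, g s)
      = ∫ x, (∫ s, G (x, s) ∂μ) ∂μ := by
    rw [hμ]
    refine setIntegral_congr_fun measurableSet_Ioc (fun x hx => ?_)
    have h1 : (fun s => G (x, s)) = (Ioi x).indicator (fun s => f x * g s) := by
      funext s
      by_cases h : x < s <;> simp [hG, indicator_apply, h, Set.mem_Ioi, Set.mem_setOf_eq]
    rw [h1, setIntegral_indicator measurableSet_Ioi]
    have h2 : Ioc (0:ℝ) R ∩ Ioi x = Ioc x R := by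
      rw [Set.Ioc_inter_Ioi, max_eq_right hx.1.le]
    rw [h2, integral_const_mul]
  have right : ∫ s, (∫ x, G (x, s) ∂μ) ∂μ
      = ∫ s in Ioc (0:ℝ) R, (∫ x in Ioc (0:ℝ) s, f x) * g s := by
    rw [hμ]
    refine setIntegral_congr_fun measurableSet_Ioc (fun s hs => ?_)
    have h1 : (fun x => G (x, s)) = (Iio s).indicator (fun x => f x * g s) := by
      funext x
      by_cases h : x < s <;> simp [hG, indicator_apply, h, Set.mem_Iio, Set.mem_setOf_eq]
    rw [h1, setIntegral_indicator measurableSet_Iio]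
    have h2 : Ioc (0:ℝ) R ∩ Iio s = Ioo 0 s := by
      ext y
      simp only [Set.mem_inter_iff, Set.mem_Ioc, Set.mem_Iio, Set.mem_Ioo]
      exact ⟨fun ⟨⟨a, _⟩, c⟩ => ⟨a, c⟩, fun ⟨a, c⟩ => ⟨⟨a, c.le.trans hs.2⟩, c⟩⟩
    rw [h2, integral_mul_const, integral_Ioc_eq_integral_Ioo]
  rw [left, key, right]

end GaussReg2

namespace GaussReg3
open GaussReg GaussReg2

noncomputable def FI (f : ℝ → ℝ) (s : ℝ) : ℝ := ∫ x in Ioc (0:ℝ) s, f x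

variable {f : ℝ → ℝ}

lemma f_int (hloc : LocallyIntegrableOn f (Set.Ici (0 : ℝ))) (R : ℝ) :
    IntegrableOn f (Ioc 0 R) :=
  (hloc.integrableOn_compact_subset Icc_subset_Ici_self isCompact_Icc).mono_set
    Ioc_subset_Icc_self

lemma fE_int (hloc : LocallyIntegrableOn f (Set.Ici (0 : ℝ))) (t R : ℝ) :
    IntegrableOn (fun x => f x * Real.exp (-t * x ^ 2)) (Ioc 0 R) := by
  have hcont : Continuous fun x : ℝ => Real.exp (-t * x ^ 2) := by continuity
  exact IntegrableOn.mul_continuousOn_of_subset (f_int hloc R) hcont.continuousOn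
    measurableSet_Ioc (isCompact_Icc (a := (0:ℝ)) (b := R)) Ioc_subset_Icc_self

lemma identity (hloc : LocallyIntegrableOn f (Set.Ici (0 : ℝ))) (t R : ℝ) (hR : 0 ≤ R) :
    ∫ x in (0:ℝ)..R, f x * Real.exp (-t * x ^ 2)
      = Real.exp (-t * R ^ 2) * (∫ x in (0:ℝ)..R, f x)
        + ∫ s in Ioc (0:ℝ) R, FI f s * (2 * t * s * Real.exp (-t * s ^ 2)) := by
  have hfi := f_int hloc R
  simp only [FI]
  rw [intervalIntegral.integral_of_le hR, intervalIntegral.integral_of_le hR,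
    ← fubini_triangle f _ R hfi (continuous_w t)]
  have h1 : ∫ x in Ioc (0:ℝ) R, f x * (∫ s in Ioc x R, 2 * t * s * Real.exp (-t * s ^ 2))
      = ∫ x in Ioc (0:ℝ) R,
          (f x * Real.exp (-t * x ^ 2) - f x * Real.exp (-t * R ^ 2)) := by
    refine setIntegral_congr_fun measurableSet_Ioc (fun x hx => ?_)
    rw [← intervalIntegral.integral_of_le hx.2, ftc_w]
    ring
  rw [h1, integral_sub (fE_int hloc t R) (hfi.mul_const _), integral_mul_const]
  ring

end GaussReg3

namespace GaussReg4
open GaussReg GaussReg2 GaussReg3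

variable {f : ℝ → ℝ} {I : ℝ}

lemma FI_cont (hloc : LocallyIntegrableOn f (Set.Ici (0 : ℝ))) :
    ContinuousOn (FI f) (Ici 0) := by
  intro x hx
  have hA : IntegrableOn f (Icc 0 (x + 1)) :=
    hloc.integrableOn_compact_subset Icc_subset_Ici_self isCompact_Icc
  have h := (intervalIntegral.continuousOn_primitive hA) x ⟨hx, by linarith [hx.out]⟩
  have hmem : Icc (0:ℝ) (x + 1) ∈ 𝓝[Ici 0] x := by
    rw [← Ici_inter_Iic]
    exact Filter.inter_mem self_mem_nhdsWithin
      (mem_nhdsWithin_of_mem_nhds (Iic_mem_nhds (by linarith)))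
  exact (h.mono_of_mem_nhdsWithin hmem : ContinuousWithinAt (FI f) (Ici 0) x)

lemma FI_bdd (hloc : LocallyIntegrableOn f (Set.Ici (0 : ℝ)))
    (hconv : Tendsto (fun R : ℝ => ∫ x in (0 : ℝ)..R, f x) atTop (𝓝 I)) :
    ∃ M : ℝ, 0 ≤ M ∧ ∀ s : ℝ, |FI f s| ≤ M := by
  have hFeq : ∀ s : ℝ, 0 ≤ s → FI f s = ∫ x in (0 : ℝ)..s, f x := fun s hs =>
    (intervalIntegral.integral_of_le hs).symm
  have h1 : ∀ᶠ R in (atTop : Filter ℝ), |(∫ x in (0 : ℝ)..R, f x) - I| < 1 := by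
    have := Metric.tendsto_atTop.mp hconv 1 one_pos
    obtain ⟨N, hN⟩ := this
    filter_upwards [eventually_ge_atTop N] with R hR
    simpa [Real.dist_eq] using hN R hR
  obtain ⟨N, hN⟩ := eventually_atTop.mp h1
  set A := max N 0 with hA
  obtain ⟨C, hC⟩ := (isCompact_Icc (a := (0:ℝ)) (b := A)).exists_bound_of_continuousOn
    ((FI_cont hloc).mono (Icc_subset_Ici_self))
  refine ⟨max C (|I| + 1), le_trans (by positivity) (le_max_right _ _), fun s => ?_⟩
  rcases le_or_gt s A with h | h
  · rcases le_or_gt s 0 with h0 | h0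
    · have : FI f s = 0 := by
        simp [FI, Ioc_eq_empty (by exact fun hh => absurd (h0.trans_lt hh) (lt_irrefl s))]
      rw [this, abs_zero]
      exact le_max_of_le_right (by positivity)
    · exact le_trans (hC s ⟨h0.le, h⟩) (le_max_left _ _)
  · have hs0 : (0:ℝ) ≤ s := le_trans (le_max_right _ _) h.le
    have := hN s (le_trans (le_max_left _ _) h.le)
    rw [← hFeq s hs0] at this
    have : |FI f s| ≤ |I| + 1 := by
      have := abs_sub_abs_le_abs_sub (FI f s) I
      linarith [this, le_of_lt ‹|FI f s - I| < 1›]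
    exact le_trans this (le_max_right _ _)

lemma FIw_int (hloc : LocallyIntegrableOn f (Set.Ici (0 : ℝ)))
    {M : ℝ} (hM : ∀ s : ℝ, |FI f s| ≤ M) (t : ℝ) (ht : 0 < t) :
    IntegrableOn (fun s => FI f s * (2 * t * s * Real.exp (-t * s ^ 2))) (Ioi 0) := by
  refine Integrable.mono' ((integrable_w t ht).const_mul M) ?_ ?_
  · exact (((FI_cont hloc).mono Ioi_subset_Ici_self).aestronglyMeasurable measurableSet_Ioi).mul
      ((continuous_w t).aestronglyMeasurable.restrict)
  · filter_upwards [ae_restrict_mem measurableSet_Ioi] with s hs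
    rw [Real.norm_eq_abs, abs_mul, abs_of_nonneg (w_nonneg t ht (le_of_lt hs))]
    exact mul_le_mul_of_nonneg_right (hM s) (w_nonneg t ht (le_of_lt hs))

lemma tendsto_J (hloc : LocallyIntegrableOn f (Set.Ici (0 : ℝ)))
    (hconv : Tendsto (fun R : ℝ => ∫ x in (0 : ℝ)..R, f x) atTop (𝓝 I))
    {M : ℝ} (hM : ∀ s : ℝ, |FI f s| ≤ M) (t : ℝ) (ht : 0 < t) :
    Tendsto (fun R : ℝ => ∫ x in (0 : ℝ)..R, f x * Real.exp (-t * x ^ 2)) atTop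
      (𝓝 (∫ s in Ioi (0:ℝ), FI f s * (2 * t * s * Real.exp (-t * s ^ 2)))) := by
  have hE0 : Tendsto (fun R : ℝ => Real.exp (-t * R ^ 2)) atTop (𝓝 0) := by
    have := (tendsto_negE t ht).neg
    simpa using this
  have T1 : Tendsto (fun R : ℝ => Real.exp (-t * R ^ 2) * (∫ x in (0 : ℝ)..R, f x)) atTop
      (𝓝 0) := by
    have := hE0.mul hconv
    simpa using this
  have T2 : Tendsto (fun R : ℝ => ∫ s in Ioc (0:ℝ) R, FI f s * (2 * t * s * Real.exp (-t * s ^ 2)))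
      atTop (𝓝 (∫ s in Ioi (0:ℝ), FI f s * (2 * t * s * Real.exp (-t * s ^ 2)))) := by
    have h := intervalIntegral_tendsto_integral_Ioi 0 (FIw_int hloc hM t ht) tendsto_id
    apply h.congr'
    filter_upwards [eventually_ge_atTop (0:ℝ)] with R hR
    simp only [id_eq]
    rw [intervalIntegral.integral_of_le hR]
  have := T1.add T2
  rw [zero_add] at this
  apply this.congr'
  filter_upwards [eventually_ge_atTop (0:ℝ)] with R hR
  exact (identity hloc t R hR).symm

end GaussReg4

namespace GaussReg5
open GaussReg GaussReg2 GaussReg3 GaussReg4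

variable {f : ℝ → ℝ} {I : ℝ}

lemma tendsto_J_zero (hloc : LocallyIntegrableOn f (Set.Ici (0 : ℝ)))
    (hconv : Tendsto (fun R : ℝ => ∫ x in (0 : ℝ)..R, f x) atTop (𝓝 I))
    {M : ℝ} (hM0 : 0 ≤ M) (hM : ∀ s : ℝ, |FI f s| ≤ M) :
    Tendsto (fun t => ∫ s in Ioi (0:ℝ), FI f s * (2 * t * s * Real.exp (-t * s ^ 2)))
      (𝓝[>] (0:ℝ)) (𝓝 I) := by
  set M' := M + |I| with hM'def
  have hM'0 : 0 ≤ M' := by positivity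
  have hM' : ∀ s : ℝ, |FI f s - I| ≤ M' := fun s =>
    le_trans (abs_sub (FI f s) I) (add_le_add_left (hM s) _)
  rw [Metric.tendsto_nhdsWithin_nhds]
  intro ε hε
  obtain ⟨N, hN⟩ := Metric.tendsto_atTop.mp hconv (ε / 4) (by positivity)
  set A := max N 0 with hAdef
  have hA0 : (0:ℝ) ≤ A := le_max_right _ _
  have hA : ∀ s : ℝ, A ≤ s → |FI f s - I| ≤ ε / 4 := by
    intro s hs
    have hs0 : (0:ℝ) ≤ s := hA0.trans hs
    have := hN s (le_trans (le_max_left _ _) hs)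
    rw [Real.dist_eq] at this
    rw [FI, ← intervalIntegral.integral_of_le hs0]
    exact this.le
  refine ⟨(ε / 2) / (M' * A ^ 2 + 1), by positivity, fun t ht hdist => ?_⟩
  have ht' : (0:ℝ) < t := ht
  rw [Real.dist_eq, sub_zero, abs_of_pos ht'] at hdist
  rw [Real.dist_eq]
  -- J t - I = ∫ (FI - I) * w
  have hIw : IntegrableOn (fun s => I * (2 * t * s * Real.exp (-t * s ^ 2))) (Ioi 0) :=
    (integrable_w t ht').const_mul I
  have hFIw := FIw_int hloc hM t ht'
  have hint : IntegrableOn (fun s => (FI f s - I) * (2 * t * s * Real.exp (-t * s ^ 2)))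
      (Ioi 0) := by
    have := hFIw.sub hIw
    simpa [sub_mul, Pi.sub_def] using this
  have hsub : (∫ s in Ioi (0:ℝ), FI f s * (2 * t * s * Real.exp (-t * s ^ 2))) - I
      = ∫ s in Ioi (0:ℝ), (FI f s - I) * (2 * t * s * Real.exp (-t * s ^ 2)) := by
    have h2 : ∫ s in Ioi (0:ℝ), I * (2 * t * s * Real.exp (-t * s ^ 2))
        = I := by rw [integral_const_mul, integral_w t ht', mul_one]
    rw [show (fun s => (FI f s - I) * (2 * t * s * Real.exp (-t * s ^ 2)))
        = fun s => FI f s * (2 * t * s * Real.exp (-t * s ^ 2))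
            - I * (2 * t * s * Real.exp (-t * s ^ 2)) by funext s; ring]
    rw [integral_sub hFIw hIw, h2]
  rw [hsub]
  have hnorm : |∫ s in Ioi (0:ℝ), (FI f s - I) * (2 * t * s * Real.exp (-t * s ^ 2))|
      ≤ ∫ s in Ioi (0:ℝ), ‖(FI f s - I) * (2 * t * s * Real.exp (-t * s ^ 2))‖ := by
    rw [← Real.norm_eq_abs]
    exact norm_integral_le_integral_norm _
  have hsplit : ∫ s in Ioi (0:ℝ), ‖(FI f s - I) * (2 * t * s * Real.exp (-t * s ^ 2))‖
      = (∫ s in Ioc (0:ℝ) A, ‖(FI f s - I) * (2 * t * s * Real.exp (-t * s ^ 2))‖)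
        + ∫ s in Ioi A, ‖(FI f s - I) * (2 * t * s * Real.exp (-t * s ^ 2))‖ := by
    rw [← Ioc_union_Ioi_eq_Ioi hA0]
    exact setIntegral_union (Ioc_disjoint_Ioi le_rfl) measurableSet_Ioi
      ((hint.mono_set (by rw [← Ioc_union_Ioi_eq_Ioi hA0]; exact subset_union_left)).norm)
      ((hint.mono_set (by rw [← Ioc_union_Ioi_eq_Ioi hA0]; exact subset_union_right)).norm)
  have hb1 : (∫ s in Ioc (0:ℝ) A, ‖(FI f s - I) * (2 * t * s * Real.exp (-t * s ^ 2))‖)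
      ≤ M' * (t * A ^ 2) := by
    have step1 : (∫ s in Ioc (0:ℝ) A, ‖(FI f s - I) * (2 * t * s * Real.exp (-t * s ^ 2))‖)
        ≤ ∫ s in Ioc (0:ℝ) A, M' * (2 * t * s * Real.exp (-t * s ^ 2)) := by
      refine setIntegral_mono_on
        ((hint.mono_set Ioc_subset_Ioi_self).norm)
        (((integrable_w t ht').mono_set Ioc_subset_Ioi_self).const_mul M')
        measurableSet_Ioc (fun s hs => ?_)
      rw [Real.norm_eq_abs, abs_mul, abs_of_nonneg (w_nonneg t ht' hs.1.le)]
      exact mul_le_mul_of_nonneg_right (hM' s) (w_nonneg t ht' hs.1.le)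
    have step2 : ∫ s in Ioc (0:ℝ) A, M' * (2 * t * s * Real.exp (-t * s ^ 2))
        = M' * (1 - Real.exp (-t * A ^ 2)) := by
      rw [integral_const_mul, ← intervalIntegral.integral_of_le hA0, ftc_w]
      norm_num
    have step3 : 1 - Real.exp (-t * A ^ 2) ≤ t * A ^ 2 := by
      have := Real.add_one_le_exp (-t * A ^ 2)
      linarith
    calc (∫ s in Ioc (0:ℝ) A, ‖(FI f s - I) * (2 * t * s * Real.exp (-t * s ^ 2))‖)
        ≤ M' * (1 - Real.exp (-t * A ^ 2)) := by rw [← step2]; exact step1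
      _ ≤ M' * (t * A ^ 2) := mul_le_mul_of_nonneg_left step3 hM'0
  have hb2 : (∫ s in Ioi A, ‖(FI f s - I) * (2 * t * s * Real.exp (-t * s ^ 2))‖)
      ≤ ε / 4 := by
    have step1 : (∫ s in Ioi A, ‖(FI f s - I) * (2 * t * s * Real.exp (-t * s ^ 2))‖)
        ≤ ∫ s in Ioi A, (ε / 4) * (2 * t * s * Real.exp (-t * s ^ 2)) := by
      refine setIntegral_mono_on
        ((hint.mono_set (Ioi_subset_Ioi hA0)).norm)
        (((integrable_w t ht').mono_set (Ioi_subset_Ioi hA0)).const_mul _)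
        measurableSet_Ioi (fun s hs => ?_)
      have hs0 : (0:ℝ) < s := lt_of_le_of_lt hA0 hs
      rw [Real.norm_eq_abs, abs_mul, abs_of_nonneg (w_nonneg t ht' hs0.le)]
      exact mul_le_mul_of_nonneg_right (hA s (le_of_lt hs)) (w_nonneg t ht' hs0.le)
    have step2 : ∫ s in Ioi A, (ε / 4) * (2 * t * s * Real.exp (-t * s ^ 2))
        ≤ (ε / 4) * 1 := by
      rw [integral_const_mul]
      refine mul_le_mul_of_nonneg_left ?_ (by positivity)
      rw [← integral_w t ht']
      refine setIntegral_mono_set (integrable_w t ht') ?_ ?_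
      · filter_upwards [ae_restrict_mem measurableSet_Ioi] with s hs
        exact w_nonneg t ht' (le_of_lt hs)
      · exact HasSubset.Subset.eventuallyLE (Ioi_subset_Ioi hA0)
    linarith
  have hfinal : M' * (t * A ^ 2) < ε / 2 := by
    have h1 : M' * (t * A ^ 2) ≤ (M' * A ^ 2 + 1) * t := by nlinarith [sq_nonneg A]
    have h2 : (M' * A ^ 2 + 1) * t < (M' * A ^ 2 + 1) * ((ε / 2) / (M' * A ^ 2 + 1)) := by
      refine mul_lt_mul_of_pos_left hdist (by positivity)
    have h3 : (M' * A ^ 2 + 1) * ((ε / 2) / (M' * A ^ 2 + 1)) = ε / 2 := by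
      rw [mul_comm]
      exact div_mul_cancel₀ _ (by positivity)
    linarith
  calc |∫ s in Ioi (0:ℝ), (FI f s - I) * (2 * t * s * Real.exp (-t * s ^ 2))|
      ≤ ∫ s in Ioi (0:ℝ), ‖(FI f s - I) * (2 * t * s * Real.exp (-t * s ^ 2))‖ := hnorm
    _ = _ := hsplit
    _ ≤ M' * (t * A ^ 2) + ε / 4 := add_le_add hb1 hb2
    _ < ε / 2 + ε / 4 := by linarith
    _ < ε := by linarith

end GaussReg5

/-- Gaussian regularization limit: if `f : ℝ → ℝ` is locally integrable on `[0,∞)`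
and the partial integrals `∫₀^R f` converge to `I` as `R → ∞`, then for every
`t > 0` the improper integral `∫₀^∞ f x * exp (-t x²) dx` converges, and its value
`g t` tends to `I` as `t → 0⁺`. -/
theorem gaussian_regularization_limit
    (f : ℝ → ℝ) (I : ℝ)
    (hloc : LocallyIntegrableOn f (Set.Ici (0 : ℝ)))
    (hconv : Tendsto (fun R : ℝ => ∫ x in (0 : ℝ)..R, f x) atTop (𝓝 I)) :
    (∀ t : ℝ, 0 < t → ∃ J : ℝ,
        Tendsto (fun R : ℝ => ∫ x in (0 : ℝ)..R, f x * Real.exp (-t * x ^ 2)) atTop (𝓝 J)) ∧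
    ∀ g : ℝ → ℝ,
      (∀ t : ℝ, 0 < t →
        Tendsto (fun R : ℝ => ∫ x in (0 : ℝ)..R, f x * Real.exp (-t * x ^ 2)) atTop (𝓝 (g t))) →
      Tendsto g (𝓝[>] (0 : ℝ)) (𝓝 I) := by
  obtain ⟨M, hM0, hM⟩ := GaussReg4.FI_bdd hloc hconv
  have hJ := fun (t : ℝ) (ht : 0 < t) => GaussReg4.tendsto_J hloc hconv hM t ht
  refine ⟨fun t ht => ⟨_, hJ t ht⟩, fun g hg => ?_⟩
  have heq : ∀ t : ℝ, 0 < t →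
      g t = ∫ s in Ioi (0:ℝ), GaussReg3.FI f s * (2 * t * s * Real.exp (-t * s ^ 2)) :=
    fun t ht => tendsto_nhds_unique (hg t ht) (hJ t ht)
  apply (GaussReg5.tendsto_J_zero hloc hconv hM0 hM).congr'
  filter_upwards [self_mem_nhdsWithin] with t ht
  exact (heq t ht).symm
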